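/- arXiv:2011.13325 — 4 statements merged into one kernel-verified Lean document; each statement's English description precedes it below -/
import Mathlib

section
/- Let A and B be symmetric positive semidefinite real n×n matrices. Then A(A+B)^†B(A+B)^†A + B(A+B)^†A(A+B)^†B = A(A+B)^†B. -/
open Matrix

/-- The four Penrose conditions characterizing the Moore–Penrose pseudoinverse. -/
def IsMoorePenrose {n : ℕ} (A P : Matrix (Fin n) (Fin n) ℝ) : Prop :=
  A * P * A = A ∧ P * A * P = P ∧ (A * P)ᵀ = A * P ∧ (P * A)ᵀ = P * A

lemma aux_ker {n : ℕ} {A B : Matrix (Fin n) (Fin n) ℝ} (hA : A.PosSemidef) (hB : B.PosSemidef)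
    {x : Fin n → ℝ} (h : (A + B) *ᵥ x = 0) : A *ᵥ x = 0 := by
  have h1 : star x ⬝ᵥ (A + B) *ᵥ x = 0 := by rw [h, dotProduct_zero]
  rw [add_mulVec, dotProduct_add] at h1
  have hA0 : star x ⬝ᵥ A *ᵥ x = 0 := le_antisymm (by linarith [hB.dotProduct_mulVec_nonneg x]) (hA.dotProduct_mulVec_nonneg x)
  exact (hA.dotProduct_mulVec_zero_iff x).mp hA0

lemma aux_mul {n : ℕ} {A B M : Matrix (Fin n) (Fin n) ℝ} (hA : A.PosSemidef) (hB : B.PosSemidef)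
    (h : (A + B) * M = 0) : A * M = 0 := by
  ext i j
  have hv : (A + B) *ᵥ (fun k => M k j) = 0 := by
    ext i'
    have := congrFun (congrFun h i') j
    simpa [mulVec, dotProduct, mul_apply] using this
  have := congrFun (aux_ker hA hB hv) i
  simpa [mulVec, dotProduct, mul_apply] using this

theorem harmonic_mean_identity {n : ℕ} (A B P : Matrix (Fin n) (Fin n) ℝ)
    (hA : A.PosSemidef) (hB : B.PosSemidef)
    (hP : IsMoorePenrose (A + B) P) :
    A * P * B * P * A + B * P * A * P * B = A * P * B := by
  obtain ⟨h1, h2, h3, h4⟩ := hP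
  have hAt : Aᵀ = A := by
    have := hA.1; rwa [IsHermitian, conjTranspose] at this
  have hBt : Bᵀ = B := by
    have := hB.1; rwa [IsHermitian, conjTranspose] at this
  have hSt : (A + B)ᵀ = A + B := by rw [transpose_add, hAt, hBt]
  -- A * P * (A+B) = A
  have e1 : A * P * (A + B) = A := by
    have hM : (A + B) * (1 - P * (A + B)) = 0 := by
      rw [mul_sub, mul_one, ← mul_assoc, h1, sub_self]
    have := aux_mul hA hB hM
    rw [mul_sub, mul_one, sub_eq_zero] at this
    rw [mul_assoc]; exact this.symm
  -- (A+B) * P * A = A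
  have e2 : (A + B) * P * A = A := by
    have hSPtS : (A + B) * Pᵀ * (A + B) = A + B := by
      have := congrArg transpose h1
      simpa [transpose_mul, hSt, ← mul_assoc] using this
    have hM : (A + B) * (1 - Pᵀ * (A + B)) = 0 := by
      rw [mul_sub, mul_one, ← mul_assoc, hSPtS, sub_self]
    have h5 := aux_mul hA hB hM
    rw [mul_sub, mul_one, sub_eq_zero] at h5
    have := congrArg transpose h5
    simpa [transpose_mul, hAt, hSt, ← mul_assoc] using this.symm
  -- A*P*B = A - A*P*A and B*P*A = A - A*P*A
  have hAB : A * P * B = A - A * P * A := by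
    rw [eq_sub_iff_add_eq, add_comm, ← mul_add]
    exact e1
  have hBA : B * P * A = A - A * P * A := by
    rw [eq_sub_iff_add_eq]
    have : A * P * A + B * P * A = (A + B) * P * A := by
      rw [add_mul, add_mul]
    rw [add_comm, this]; exact e2
  have eX : A * P * A * P * (A + B) = A * P * A := by
    have h := congrArg (fun M => A * P * M) e1
    simpa [← mul_assoc] using h
  rw [hAB, hBA, ← mul_add ((A - A * P * A) * P) A B, sub_mul, sub_mul, e1, eX]
end

section
/- Let A and B be symmetric positive semidefinite real n×n matrices. Then the harmonic mean H(A,B) := A(A+B)^†B is symmetric, i.e. A(A+B)^†B = B(A+B)^†A and (A(A+B)^†B)^T = A(A+B)^†B. -/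
open Matrix

/-- If `X Xᵀ + Y Yᵀ = 0` over ℝ then `X = 0`. -/
lemma aux_mul_transpose_add_eq_zero {n : ℕ} {X Y : Matrix (Fin n) (Fin n) ℝ}
    (h : X * Xᵀ + Y * Yᵀ = 0) : X = 0 := by
  have htr : trace (X * Xᵀ) + trace (Y * Yᵀ) = 0 := by
    rw [← trace_add, h, trace_zero]
  have hsum : ∀ Z : Matrix (Fin n) (Fin n) ℝ, trace (Z * Zᵀ) = ∑ i, ∑ j, Z i j ^ 2 := by
    intro Z
    simp [trace, diag, mul_apply, sq]
  have hnonneg : ∀ Z : Matrix (Fin n) (Fin n) ℝ, 0 ≤ trace (Z * Zᵀ) := by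
    intro Z
    rw [hsum]
    exact Finset.sum_nonneg fun i _ => Finset.sum_nonneg fun j _ => sq_nonneg _
  have hX0 : trace (X * Xᵀ) = 0 := by
    have h1 := hnonneg X
    have h2 := hnonneg Y
    linarith
  rw [hsum] at hX0
  ext i j
  have h1 : ∀ i ∈ Finset.univ, (0:ℝ) ≤ ∑ j, X i j ^ 2 :=
    fun i _ => Finset.sum_nonneg fun j _ => sq_nonneg _
  have h2 := (Finset.sum_eq_zero_iff_of_nonneg h1).mp hX0 i (Finset.mem_univ i)
  have h3 := (Finset.sum_eq_zero_iff_of_nonneg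
    (fun j _ => sq_nonneg (X i j))).mp h2 j (Finset.mem_univ j)
  simpa using sq_eq_zero_iff.mp h3

/-- Uniqueness of the Moore–Penrose pseudoinverse. -/
lemma aux_mp_unique {n : ℕ} {M P Q : Matrix (Fin n) (Fin n) ℝ}
    (hP : IsMoorePenrose M P) (hQ : IsMoorePenrose M Q) : P = Q := by
  obtain ⟨hP1, hP2, hP3, hP4⟩ := hP
  obtain ⟨hQ1, hQ2, hQ3, hQ4⟩ := hQ
  have hMP : M * P = M * Q := by
    calc M * P = (M * Q * M) * P := by rw [hQ1]
      _ = (M * Q)ᵀ * (M * P)ᵀ := by rw [hQ3, hP3]; noncomm_ring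
      _ = (M * P * M * Q)ᵀ := by rw [← transpose_mul, ← mul_assoc]
      _ = (M * Q)ᵀ := by rw [hP1]
      _ = M * Q := hQ3
  have hPM : P * M = Q * M := by
    calc P * M = P * (M * Q * M) := by rw [hQ1]
      _ = (P * M)ᵀ * (Q * M)ᵀ := by rw [hP4, hQ4]; noncomm_ring
      _ = (Q * M * P * M)ᵀ := by rw [← transpose_mul, ← mul_assoc]
      _ = (Q * (M * P * M))ᵀ := by rw [mul_assoc, mul_assoc, mul_assoc]
      _ = (Q * M)ᵀ := by rw [hP1]
      _ = Q * M := hQ4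
  calc P = P * M * P := hP2.symm
    _ = Q * M * P := by rw [hPM]
    _ = Q * (M * P) := by rw [mul_assoc]
    _ = Q * (M * Q) := by rw [hMP]
    _ = Q * M * Q := by rw [mul_assoc]
    _ = Q := hQ2

open scoped MatrixOrder in
/-- Square root of a positive semidefinite matrix. -/
noncomputable def Matrix.PosSemidef.sqrt {n : ℕ} {C : Matrix (Fin n) (Fin n) ℝ}
    (_hC : C.PosSemidef) : Matrix (Fin n) (Fin n) ℝ :=
  CFC.sqrt C

open scoped MatrixOrder in
lemma Matrix.PosSemidef.posSemidef_sqrt {n : ℕ} {C : Matrix (Fin n) (Fin n) ℝ}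
    (hC : C.PosSemidef) : hC.sqrt.PosSemidef :=
  (CFC.sqrt_nonneg C).posSemidef

open scoped MatrixOrder in
lemma Matrix.PosSemidef.sqrt_mul_self {n : ℕ} {C : Matrix (Fin n) (Fin n) ℝ}
    (hC : C.PosSemidef) : hC.sqrt * hC.sqrt = C :=
  CFC.sqrt_mul_sqrt_self C hC.nonneg

theorem harmonic_mean_symm {n : ℕ} (A B P : Matrix (Fin n) (Fin n) ℝ)
    (hA : A.PosSemidef) (hB : B.PosSemidef)
    (hP : IsMoorePenrose (A + B) P) :
    A * P * B = B * P * A ∧ (A * P * B)ᵀ = A * P * B := by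
  set S := A + B with hS
  have hAt : Aᵀ = A := by
    have := hA.isHermitian.eq
    rwa [conjTranspose_eq_transpose_of_trivial] at this
  have hBt : Bᵀ = B := by
    have := hB.isHermitian.eq
    rwa [conjTranspose_eq_transpose_of_trivial] at this
  have hSt : Sᵀ = S := by rw [hS, transpose_add, hAt, hBt]
  obtain ⟨h1, h2, h3, h4⟩ := hP
  -- P is symmetric by uniqueness of the pseudoinverse
  have hPt : P = Pᵀ := by
    apply aux_mp_unique (M := S) ⟨h1, h2, h3, h4⟩
    refine ⟨?_, ?_, ?_, ?_⟩
    · have := congrArg transpose h1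
      rwa [transpose_mul, transpose_mul, hSt, ← mul_assoc] at this
    · have := congrArg transpose h2
      rwa [transpose_mul, transpose_mul, hSt, ← mul_assoc] at this
    · have e : S * Pᵀ = (P * S)ᵀ := by rw [transpose_mul, hSt]
      rw [e, h4]; exact h4
    · have e : Pᵀ * S = (S * P)ᵀ := by rw [transpose_mul, hSt]
      rw [e, h3]; exact h3
  -- M := 1 - S*P kills A and B
  set M := (1 : Matrix (Fin n) (Fin n) ℝ) - S * P with hM
  have hMt : Mᵀ = M := by rw [hM, transpose_sub, transpose_one, h3]
  have hMS : M * S = 0 := by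
    rw [hM, sub_mul, one_mul, mul_assoc]
    have : S * (P * S) = S := by rw [← mul_assoc, h1]
    rw [this, sub_self]
  have hMSM : M * A * Mᵀ + M * B * Mᵀ = 0 := by
    have : M * S * Mᵀ = 0 := by rw [hMS, zero_mul]
    calc M * A * Mᵀ + M * B * Mᵀ = M * (A + B) * Mᵀ := by noncomm_ring
      _ = 0 := this
  have key : ∀ (C : Matrix (Fin n) (Fin n) ℝ) (hC : C.PosSemidef),
      M * C * Mᵀ = (M * hC.sqrt) * (M * hC.sqrt)ᵀ := by
    intro C hC
    have hRt : hC.sqrt ᵀ = hC.sqrt := by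
      have := hC.posSemidef_sqrt.isHermitian.eq
      rwa [conjTranspose_eq_transpose_of_trivial] at this
    calc M * C * Mᵀ = M * (hC.sqrt * hC.sqrt) * Mᵀ := by rw [hC.sqrt_mul_self]
      _ = M * hC.sqrt * (M * hC.sqrt)ᵀ := by rw [transpose_mul, hRt]; noncomm_ring
  have hMA : M * A = 0 := by
    have h0 : (M * hA.sqrt) * (M * hA.sqrt)ᵀ + (M * hB.sqrt) * (M * hB.sqrt)ᵀ = 0 := by
      rw [← key A hA, ← key B hB]; exact hMSM
    have hX := aux_mul_transpose_add_eq_zero h0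
    rw [← hA.sqrt_mul_self, ← mul_assoc, hX, zero_mul]
  -- hence S*P*A = A
  have hSPA : S * P * A = A := by
    have : M * A = A - S * P * A := by rw [hM]; noncomm_ring
    rw [this] at hMA
    linear_combination (norm := noncomm_ring) -hMA
  have hAPS : A * P * S = A := by
    have := congrArg transpose hSPA
    rwa [transpose_mul, transpose_mul, hAt, hSt, ← hPt, ← mul_assoc] at this
  -- compute both sides
  have hAPB : A * P * B = A - A * P * A := by
    have : A * P * B = A * P * S - A * P * A := by rw [hS]; noncomm_ring
    rw [this, hAPS]
  have hBPA : B * P * A = A - A * P * A := by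
    have : B * P * A = S * P * A - A * P * A := by rw [hS]; noncomm_ring
    rw [this, hSPA]
  refine ⟨hAPB.trans hBPA.symm, ?_⟩
  rw [hAPB, transpose_sub, hAt, transpose_mul, transpose_mul, hAt, ← hPt, mul_assoc]
end

section
/- Let A and B be symmetric positive semidefinite real n×n matrices. For fixed u, v ∈ ℝ^n, the infimum over w ∈ ℝ^n of ‖u - w‖_A^2 + ‖v - w‖_B^2 is attained at w = (A+B)^†(Au + Bv), and equals ‖u - v‖²_{H} where H = B(A+B)^†A(A+B)^†B + A(A+B)^†B(A+B)^†A = A(A+B)^†B. -/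
open Matrix

section Aux

variable {n : ℕ}

private lemma eq_zero_of_mulVec {M : Matrix (Fin n) (Fin n) ℝ}
    (h : ∀ x, M *ᵥ x = 0) : M = 0 := by
  ext i j
  have := congrFun (h (Pi.single j 1)) i
  simpa [mulVec_single] using this

private lemma mp_unique {M P Q : Matrix (Fin n) (Fin n) ℝ}
    (hP : IsMoorePenrose M P) (hQ : IsMoorePenrose M Q) : P = Q := by
  obtain ⟨hP1, hP2, hP3, hP4⟩ := hP
  obtain ⟨hQ1, hQ2, hQ3, hQ4⟩ := hQ
  have hMQ : M * Q = M * P := by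
    calc M * Q = (M * P * M) * Q := by rw [hP1]
    _ = (M * P) * (M * Q) := by noncomm_ring
    _ = (M * P)ᵀ * (M * Q)ᵀ := by rw [hP3, hQ3]
    _ = ((M * Q) * (M * P))ᵀ := (transpose_mul _ _).symm
    _ = ((M * Q * M) * P)ᵀ := by noncomm_ring
    _ = (M * P)ᵀ := by rw [hQ1]
    _ = M * P := hP3
  have hQM : Q * M = P * M := by
    calc Q * M = Q * (M * P * M) := by rw [hP1]
    _ = (Q * M) * (P * M) := by noncomm_ring
    _ = (Q * M)ᵀ * (P * M)ᵀ := by rw [hQ4, hP4]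
    _ = ((P * M) * (Q * M))ᵀ := (transpose_mul _ _).symm
    _ = (P * (M * Q * M))ᵀ := by noncomm_ring
    _ = (P * M)ᵀ := by rw [hQ1]
    _ = P * M := hP4
  calc P = P * M * P := hP2.symm
  _ = P * (M * Q) := by rw [hMQ, mul_assoc]
  _ = (P * M) * Q := by rw [mul_assoc]
  _ = (Q * M) * Q := by rw [hQM]
  _ = Q := hQ2

private lemma psd_cancel {A B Q : Matrix (Fin n) (Fin n) ℝ}
    (hA : A.PosSemidef) (hB : B.PosSemidef) (hQ : Q * (A + B) = 0) :
    Q * A = 0 := by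
  have hS : (A + B).PosSemidef := hA.add hB
  have hAt : Aᵀ = A := (conjTranspose_eq_transpose_of_trivial A).symm.trans hA.1
  have hAQ : A * Qᵀ = 0 := by
    apply eq_zero_of_mulVec
    intro x
    set y := Qᵀ *ᵥ x with hy
    have hform : y ⬝ᵥ ((A + B) *ᵥ y) = 0 := by
      have h0 : Q *ᵥ ((A + B) *ᵥ y) = 0 := by
        rw [mulVec_mulVec, hy, mulVec_mulVec, hQ, zero_mul, zero_mulVec]
      calc y ⬝ᵥ ((A + B) *ᵥ y) = (x ᵥ* Q) ⬝ᵥ ((A + B) *ᵥ y) := by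
            rw [hy, mulVec_transpose]
      _ = x ⬝ᵥ (Q *ᵥ ((A + B) *ᵥ y)) := (dotProduct_mulVec x Q _).symm
      _ = 0 := by rw [h0, dotProduct_zero]
    have hSy : (A + B) *ᵥ y = 0 := by
      have := (hS.dotProduct_mulVec_zero_iff y).mp
      simpa using this (by simpa using hform)
    have hsplit : y ⬝ᵥ (A *ᵥ y) + y ⬝ᵥ (B *ᵥ y) = 0 := by
      rw [← dotProduct_add, ← add_mulVec, hSy, dotProduct_zero]
    have h1 : (0:ℝ) ≤ y ⬝ᵥ (A *ᵥ y) := by simpa using hA.dotProduct_mulVec_nonneg y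
    have h2 : (0:ℝ) ≤ y ⬝ᵥ (B *ᵥ y) := by simpa using hB.dotProduct_mulVec_nonneg y
    have hz : y ⬝ᵥ (A *ᵥ y) = 0 := by linarith
    have := (hA.dotProduct_mulVec_zero_iff y).mp (by simpa using hz)
    rw [← mulVec_mulVec]
    exact this
  have h := congrArg transpose hAQ
  rwa [transpose_mul, transpose_transpose, hAt, transpose_zero] at h

private lemma third_id {R : Type*} [Ring R] {S A B P : R} (hS : A + B = S)
    (h1 : S * P * A = A) (h2 : A * P * S = A) :
    B * P * A * P * B + A * P * B * P * A = A * P * B := by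
  have h2r : A * (P * S) = A := by rw [← mul_assoc]; exact h2
  have hB : B = S - A := by rw [← hS]; abel
  rw [hB]
  simp only [sub_mul, mul_sub, ← mul_assoc]
  simp only [h1, h2]
  simp only [mul_assoc, h2r]
  simp only [← mul_assoc]
  abel

private lemma quad_expand {A : Matrix (Fin n) (Fin n) ℝ} (hAt : Aᵀ = A)
    (x d : Fin n → ℝ) :
    (x + d) ⬝ᵥ A *ᵥ (x + d) =
      x ⬝ᵥ A *ᵥ x + 2 * (d ⬝ᵥ A *ᵥ x) + d ⬝ᵥ A *ᵥ d := by
  have hsym : x ⬝ᵥ A *ᵥ d = d ⬝ᵥ A *ᵥ x := by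
    rw [dotProduct_mulVec, ← mulVec_transpose, hAt, dotProduct_comm]
  simp only [add_dotProduct, dotProduct_add, mulVec_add]
  rw [hsym]; ring

end Aux

theorem inf_attained_harmonic {n : ℕ} (A B P : Matrix (Fin n) (Fin n) ℝ)
    (hA : A.PosSemidef) (hB : B.PosSemidef)
    (hP : IsMoorePenrose (A + B) P) (u v : Fin n → ℝ) :
    (∀ w : Fin n → ℝ,
        (u - P.mulVec (A.mulVec u + B.mulVec v)) ⬝ᵥ
            A.mulVec (u - P.mulVec (A.mulVec u + B.mulVec v)) +
          (v - P.mulVec (A.mulVec u + B.mulVec v)) ⬝ᵥ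
            B.mulVec (v - P.mulVec (A.mulVec u + B.mulVec v)) ≤
        (u - w) ⬝ᵥ A.mulVec (u - w) + (v - w) ⬝ᵥ B.mulVec (v - w)) ∧
    ((u - P.mulVec (A.mulVec u + B.mulVec v)) ⬝ᵥ
        A.mulVec (u - P.mulVec (A.mulVec u + B.mulVec v)) +
      (v - P.mulVec (A.mulVec u + B.mulVec v)) ⬝ᵥ
        B.mulVec (v - P.mulVec (A.mulVec u + B.mulVec v)) =
      (u - v) ⬝ᵥ (A * P * B).mulVec (u - v)) ∧
    B * P * A * P * B + A * P * B * P * A = A * P * B := by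
  obtain ⟨h1, h2, h3, h4⟩ := hP
  have hAt : Aᵀ = A := (conjTranspose_eq_transpose_of_trivial A).symm.trans hA.1
  have hBt : Bᵀ = B := (conjTranspose_eq_transpose_of_trivial B).symm.trans hB.1
  have hSt : (A + B)ᵀ = A + B := by rw [transpose_add, hAt, hBt]
  -- P is symmetric
  have hPt : Pᵀ = P := by
    refine mp_unique (M := A + B) ⟨?_, ?_, ?_, ?_⟩ ⟨h1, h2, h3, h4⟩
    · have h := congrArg transpose h1
      rw [transpose_mul, transpose_mul, hSt] at h
      rw [← mul_assoc] at h; exact h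
    · have h := congrArg transpose h2
      rw [transpose_mul, transpose_mul, hSt] at h
      rw [← mul_assoc] at h; exact h
    · have e1 : (A + B) * Pᵀ = P * (A + B) := by
        calc (A + B) * Pᵀ = (A + B)ᵀ * Pᵀ := by rw [hSt]
        _ = (P * (A + B))ᵀ := (transpose_mul _ _).symm
        _ = P * (A + B) := h4
      rw [e1]; exact h4
    · have e2 : Pᵀ * (A + B) = (A + B) * P := by
        calc Pᵀ * (A + B) = Pᵀ * (A + B)ᵀ := by rw [hSt]
        _ = ((A + B) * P)ᵀ := (transpose_mul _ _).symm
        _ = (A + B) * P := h3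
      rw [e2]; exact h3
  -- range identities
  have hSPA : (A + B) * P * A = A := by
    have hq : (1 - (A + B) * P) * (A + B) = 0 := by
      rw [sub_mul, one_mul, h1, sub_self]
    have h := psd_cancel hA hB hq
    rw [sub_mul, one_mul, sub_eq_zero] at h
    exact h.symm
  have hSPB : (A + B) * P * B = B := by
    have hq : (1 - (A + B) * P) * (B + A) = 0 := by
      rw [add_comm B A, sub_mul, one_mul, h1, sub_self]
    have h := psd_cancel hB hA hq
    rw [sub_mul, one_mul, sub_eq_zero] at h
    exact h.symm
  have hAPS : A * P * (A + B) = A := by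
    have h := congrArg transpose hSPA
    rw [transpose_mul, transpose_mul, hSt, hAt, hPt, ← mul_assoc] at h
    exact h
  have hBPS : B * P * (A + B) = B := by
    have h := congrArg transpose hSPB
    rw [transpose_mul, transpose_mul, hSt, hBt, hPt, ← mul_assoc] at h
    exact h
  have hthird : B * P * A * P * B + A * P * B * P * A = A * P * B :=
    third_id rfl hSPA hAPS
  -- decompositions
  have hAPB : A * P * B = A - A * P * A := by
    have h := hAPS; rw [mul_add] at h
    exact eq_sub_of_add_eq' h
  have hBPA : B * P * A = A - A * P * A := by
    have h := hSPA; rw [add_mul, add_mul] at h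
    exact eq_sub_of_add_eq' h
  have hAPA : A * P * A = A - A * P * B := by rw [hAPB]; abel
  have hBPB : B * P * B = B - B * P * A := by
    have h := hBPS; rw [mul_add] at h
    exact eq_sub_of_add_eq' h
  set wst := P *ᵥ (A *ᵥ u + B *ᵥ v) with hwst
  have m1 : A *ᵥ (u - wst) = (A * P * B) *ᵥ (u - v) := by
    rw [hwst]
    simp only [mulVec_sub, mulVec_add, mulVec_mulVec, ← mul_assoc]
    rw [hAPA]
    simp only [sub_mulVec]
    abel
  have m2 : B *ᵥ (v - wst) = (B * P * A) *ᵥ (v - u) := by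
    rw [hwst]
    simp only [mulVec_sub, mulVec_add, mulVec_mulVec, ← mul_assoc]
    rw [hBPB]
    simp only [sub_mulVec]
    abel
  have hzero : A *ᵥ (u - wst) + B *ᵥ (v - wst) = 0 := by
    have k1 : A *ᵥ wst + B *ᵥ wst = A *ᵥ u + B *ᵥ v := by
      rw [← add_mulVec, hwst, mulVec_mulVec]
      simp only [mulVec_add, mulVec_mulVec, ← mul_assoc]
      rw [hSPA, hSPB]
    have hsplit : A *ᵥ (u - wst) + B *ᵥ (v - wst)
        = (A *ᵥ u + B *ᵥ v) - (A *ᵥ wst + B *ᵥ wst) := by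
      simp only [mulVec_sub]; abel
    rw [hsplit, k1, sub_self]
  refine ⟨?_, ?_, hthird⟩
  · intro w
    have hu : u - w = (u - wst) + (wst - w) := by abel
    have hv : v - w = (v - wst) + (wst - w) := by abel
    rw [hu, hv, quad_expand hAt, quad_expand hBt]
    have hcross : (wst - w) ⬝ᵥ A *ᵥ (u - wst) + (wst - w) ⬝ᵥ B *ᵥ (v - wst) = 0 := by
      rw [← dotProduct_add, hzero, dotProduct_zero]
    have hqa : (0:ℝ) ≤ (wst - w) ⬝ᵥ A *ᵥ (wst - w) := by simpa using hA.dotProduct_mulVec_nonneg (wst - w)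
    have hqb : (0:ℝ) ≤ (wst - w) ⬝ᵥ B *ᵥ (wst - w) := by simpa using hB.dotProduct_mulVec_nonneg (wst - w)
    linarith
  · have hAPBt : (A * P * B)ᵀ = B * P * A := by
      rw [transpose_mul, transpose_mul, hAt, hBt, hPt, ← mul_assoc]
    have hBPAt : (B * P * A)ᵀ = A * P * B := by
      rw [transpose_mul, transpose_mul, hAt, hBt, hPt, ← mul_assoc]
    have fa : (u - wst) ⬝ᵥ A *ᵥ (u - wst) =
        (u - v) ⬝ᵥ (B * P * A * P * B) *ᵥ (u - v) := by
      rw [m1, dotProduct_mulVec, ← mulVec_transpose, hAPBt]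
      have : (B * P * A) *ᵥ (u - wst) = (B * P * A * P * B) *ᵥ (u - v) := by
        calc (B * P * A) *ᵥ (u - wst) = (B * P) *ᵥ (A *ᵥ (u - wst)) := by
              rw [mulVec_mulVec]
        _ = (B * P) *ᵥ ((A * P * B) *ᵥ (u - v)) := by rw [m1]
        _ = (B * P * (A * P * B)) *ᵥ (u - v) := by rw [mulVec_mulVec]
        _ = (B * P * A * P * B) *ᵥ (u - v) := by noncomm_ring
      rw [this, dotProduct_comm]
    have fb : (v - wst) ⬝ᵥ B *ᵥ (v - wst) =
        (u - v) ⬝ᵥ (A * P * B * P * A) *ᵥ (u - v) := by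
      rw [m2, dotProduct_mulVec, ← mulVec_transpose, hBPAt]
      have h5 : (A * P * B) *ᵥ (v - wst) = (A * P * B * P * A) *ᵥ (v - u) := by
        calc (A * P * B) *ᵥ (v - wst) = (A * P) *ᵥ (B *ᵥ (v - wst)) := by
              rw [mulVec_mulVec]
        _ = (A * P) *ᵥ ((B * P * A) *ᵥ (v - u)) := by rw [m2]
        _ = (A * P * (B * P * A)) *ᵥ (v - u) := by rw [mulVec_mulVec]
        _ = (A * P * B * P * A) *ᵥ (v - u) := by noncomm_ring
      rw [h5, dotProduct_comm]
      have hneg : v - u = -(u - v) := by abel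
      rw [hneg, mulVec_neg, dotProduct_neg, neg_dotProduct, neg_neg]
    rw [fa, fb, ← dotProduct_add, ← add_mulVec, hthird]
end

section
/- For any u, v ∈ ℝ^n and symmetric positive semidefinite A, B, inf_w (‖u-w‖_A^2 + ‖v-w‖_B^2) = (u-v)^T A(A+B)^†B (u-v). -/
open Matrix

theorem inf_eq_harmonic_quadform {n : ℕ} (A B P : Matrix (Fin n) (Fin n) ℝ)
    (hA : A.PosSemidef) (hB : B.PosSemidef)
    (hP : IsMoorePenrose (A + B) P) (u v : Fin n → ℝ) :
    (⨅ w : Fin n → ℝ,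
        (u - w) ⬝ᵥ A.mulVec (u - w) + (v - w) ⬝ᵥ B.mulVec (v - w)) =
      (u - v) ⬝ᵥ (A * P * B).mulVec (u - v) := by
  obtain ⟨h1, h2, h3, h4⟩ := hP
  set S : Matrix (Fin n) (Fin n) ℝ := A + B with hSdef
  have hAt : Aᵀ = A := by
    have := hA.1; rwa [Matrix.IsHermitian, conjTranspose_eq_transpose_of_trivial] at this
  have hBt : Bᵀ = B := by
    have := hB.1; rwa [Matrix.IsHermitian, conjTranspose_eq_transpose_of_trivial] at this
  have hSt : Sᵀ = S := by simp [hSdef, Matrix.transpose_add, hAt, hBt]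
  have hS : S.PosSemidef := hA.add hB
  -- Q := 1 - S*P is a symmetric idempotent with S*Q = Q*S = 0
  set Q : Matrix (Fin n) (Fin n) ℝ := 1 - S * P with hQdef
  have hQt : Qᵀ = Q := by
    simp [hQdef, Matrix.transpose_sub, h3]
  have hQS : Q * S = 0 := by
    simp [hQdef, Matrix.sub_mul, h1]
  have hSQ : S * Q = 0 := by
    have : (Q * S)ᵀ = 0 := by rw [hQS]; simp
    rwa [Matrix.transpose_mul, hQt, hSt] at this
  have hQQ : Q * Q = Q := by
    have : Q * Q = Q - Q * S * P := by rw [hQdef]; noncomm_ring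
    rw [this, hQS]; simp
  -- key: S * P * B = B
  have hSPB : S * P * B = B := by
    have hQB : Q * B = 0 := by
      ext i j
      have hy : ∀ x : Fin n → ℝ, (Q * B) *ᵥ x = 0 := by
        intro x
        set y : Fin n → ℝ := (Q * B) *ᵥ x with hy
        have hSy : S *ᵥ y = 0 := by
          rw [hy, Matrix.mulVec_mulVec, ← Matrix.mul_assoc, hSQ]
          simp
        have hBy : B *ᵥ y = 0 := by
          rw [← hB.dotProduct_mulVec_zero_iff]
          have hApos := hA.dotProduct_mulVec_nonneg y
          have hBpos := hB.dotProduct_mulVec_nonneg y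
          have hsum : star y ⬝ᵥ A *ᵥ y + star y ⬝ᵥ B *ᵥ y = 0 := by
            rw [← dotProduct_add, ← Matrix.add_mulVec, ← hSdef, hSy]
            simp
          linarith
        have : y ⬝ᵥ y = 0 := by
          have hyQ : Q *ᵥ y = y := by
            rw [hy, Matrix.mulVec_mulVec, ← Matrix.mul_assoc, hQQ]
          have hyB : y ᵥ* B = 0 := by
            rw [← Matrix.mulVec_transpose, hBt, hBy]
          have hyQ' : y ᵥ* Q = y := by
            rw [← Matrix.mulVec_transpose, hQt, hyQ]
          calc y ⬝ᵥ y = y ⬝ᵥ (Q *ᵥ (B *ᵥ x)) := by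
                rw [Matrix.mulVec_mulVec, ← hy]
            _ = (y ᵥ* Q) ⬝ᵥ (B *ᵥ x) := by rw [Matrix.dotProduct_mulVec]
            _ = y ⬝ᵥ (B *ᵥ x) := by rw [hyQ']
            _ = (y ᵥ* B) ⬝ᵥ x := by rw [Matrix.dotProduct_mulVec]
            _ = 0 := by rw [hyB]; simp
        exact (dotProduct_self_eq_zero (v := y)).mp this
      have := congrFun (hy (fun k => if k = j then 1 else 0)) i
      simpa [Matrix.mulVec, dotProduct] using this
    have : S * P * B = B - Q * B := by rw [hQdef]; noncomm_ring
    rw [this, hQB, sub_zero]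
  -- abbreviations
  set d : Fin n → ℝ := u - v with hd
  set m : Fin n → ℝ := (P * B) *ᵥ d with hm
  set c : ℝ := d ⬝ᵥ (A * P * B) *ᵥ d with hc
  have hSm : S *ᵥ m = B *ᵥ d := by
    rw [hm, Matrix.mulVec_mulVec, ← Matrix.mul_assoc, hSPB]
  have expand : ∀ (M : Matrix (Fin n) (Fin n) ℝ) (a b : Fin n → ℝ),
      (a - b) ⬝ᵥ M *ᵥ (a - b)
        = a ⬝ᵥ M *ᵥ a - a ⬝ᵥ M *ᵥ b - b ⬝ᵥ M *ᵥ a + b ⬝ᵥ M *ᵥ b := by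
    intro M a b
    rw [Matrix.mulVec_sub, dotProduct_sub, sub_dotProduct, sub_dotProduct]
    ring
  have key : ∀ x : Fin n → ℝ,
      x ⬝ᵥ A *ᵥ x + (x - d) ⬝ᵥ B *ᵥ (x - d)
        = c + (x - m) ⬝ᵥ S *ᵥ (x - m) := by
    intro x
    have hxSx : x ⬝ᵥ S *ᵥ x = x ⬝ᵥ A *ᵥ x + x ⬝ᵥ B *ᵥ x := by
      rw [hSdef, Matrix.add_mulVec, dotProduct_add]
    have hxSm : x ⬝ᵥ S *ᵥ m = x ⬝ᵥ B *ᵥ d := by rw [hSm]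
    have hmSx : m ⬝ᵥ S *ᵥ x = (B *ᵥ d) ⬝ᵥ x := by
      rw [Matrix.dotProduct_mulVec, ← Matrix.mulVec_transpose, hSt, hSm]
    have hdBx : d ⬝ᵥ B *ᵥ x = (B *ᵥ d) ⬝ᵥ x := by
      rw [Matrix.dotProduct_mulVec, ← Matrix.mulVec_transpose, hBt]
    have hmSm : m ⬝ᵥ S *ᵥ m = d ⬝ᵥ (B * P * B) *ᵥ d := by
      rw [hSm, Matrix.dotProduct_mulVec, ← Matrix.mulVec_transpose, hBt, hm,
        Matrix.mulVec_mulVec, ← Matrix.mul_assoc, dotProduct_comm]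
    have hcc : c + d ⬝ᵥ (B * P * B) *ᵥ d = d ⬝ᵥ B *ᵥ d := by
      have : A * P * B + B * P * B = B := by
        have : A * P * B + B * P * B = S * P * B := by rw [hSdef]; noncomm_ring
        rw [this, hSPB]
      rw [hc, ← dotProduct_add, ← Matrix.add_mulVec, this]
    rw [expand B x d, expand S x m, hxSx, hxSm, hmSx, hmSm, hdBx]
    linarith
  have hlow : ∀ w : Fin n → ℝ,
      c ≤ (u - w) ⬝ᵥ A *ᵥ (u - w) + (v - w) ⬝ᵥ B *ᵥ (v - w) := by
    intro w
    have hvw : v - w = (u - w) - d := by rw [hd]; abel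
    have hpos : 0 ≤ ((u - w) - m) ⬝ᵥ S *ᵥ ((u - w) - m) := by
      have := hS.dotProduct_mulVec_nonneg ((u - w) - m)
      simpa using this
    have := key (u - w)
    rw [hvw]
    linarith
  refine le_antisymm ?_ (le_ciInf hlow)
  have hbdd : BddBelow (Set.range fun w : Fin n → ℝ =>
      (u - w) ⬝ᵥ A *ᵥ (u - w) + (v - w) ⬝ᵥ B *ᵥ (v - w)) := by
    refine ⟨c, ?_⟩
    rintro r ⟨w, rfl⟩
    exact hlow w
  have hval : (u - (u - m)) ⬝ᵥ A *ᵥ (u - (u - m))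
      + (v - (u - m)) ⬝ᵥ B *ᵥ (v - (u - m)) = c := by
    have hum : u - (u - m) = m := by abel
    have hvm : v - (u - m) = m - d := by rw [hd]; abel
    rw [hum, hvm]
    have := key m
    simpa using this
  calc (⨅ w : Fin n → ℝ,
        (u - w) ⬝ᵥ A *ᵥ (u - w) + (v - w) ⬝ᵥ B *ᵥ (v - w))
      ≤ (u - (u - m)) ⬝ᵥ A *ᵥ (u - (u - m))
        + (v - (u - m)) ⬝ᵥ B *ᵥ (v - (u - m)) := ciInf_le hbdd (u - m)
    _ = c := hval
end
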